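/- With I_f(x) = x - f(x)/(a_n-a_1)², the map I_f has a unique fixed point λ ∈ ℝ (the unique zero of f), and for every x ∈ ℝ the iterates I_f^n(x) converge to λ. -/

import Mathlib

open Finset Filter Topology

private lemma lagrange_ident {ι : Type*} (s : Finset ι) (w b : ι → ℝ) :
    2 * ((∑ i ∈ s, b i * b i * w i) * (∑ i ∈ s, w i)
        - (∑ i ∈ s, b i * w i) * (∑ i ∈ s, b i * w i))
    = ∑ i ∈ s, ∑ j ∈ s, w i * w j * (b i - b j) ^ 2 := by
  have h1 : ∀ i j, w i * w j * (b i - b j) ^ 2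
      = b i * b i * w i * w j + w i * (b j * b j * w j) - 2 * ((b i * w i) * (b j * w j)) := by
    intros; ring
  calc 2 * ((∑ i ∈ s, b i * b i * w i) * (∑ i ∈ s, w i)
        - (∑ i ∈ s, b i * w i) * (∑ i ∈ s, b i * w i))
      = ∑ i ∈ s, (∑ j ∈ s, (b i * b i * w i * w j)
          + ∑ j ∈ s, (w i * (b j * b j * w j))
          - ∑ j ∈ s, (2 * ((b i * w i) * (b j * w j)))) := by
        simp only [← Finset.mul_sum, ← Finset.sum_mul, Finset.sum_sub_distrib,
          Finset.sum_add_distrib]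
        ring
    _ = ∑ i ∈ s, ∑ j ∈ s, w i * w j * (b i - b j) ^ 2 := by
        refine Finset.sum_congr rfl fun i _ => ?_
        rw [← Finset.sum_add_distrib, ← Finset.sum_sub_distrib]
        exact Finset.sum_congr rfl fun j _ => (h1 i j).symm

set_option maxHeartbeats 1000000 in
theorem If_unique_fixed_point_and_convergence (n : ℕ) (hn : 2 ≤ n) (a : Fin n → ℝ)
    (ha : StrictMono a) (E : ℝ)
    (hE1 : a ⟨0, by omega⟩ < E) (hE2 : E < a ⟨n - 1, by omega⟩)
    (f : ℝ → ℝ)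
    (hf : f = fun t : ℝ => (∑ i, a i * Real.exp (t * a i)) / (∑ i, Real.exp (t * a i)) - E)
    (If : ℝ → ℝ)
    (hIf : If = fun t : ℝ => t - f t / (a ⟨n - 1, by omega⟩ - a ⟨0, by omega⟩) ^ 2) :
    ∃ lam : ℝ, f lam = 0 ∧ If lam = lam ∧ (∀ mu : ℝ, If mu = mu → mu = lam) ∧
      ∀ x : ℝ, Tendsto (fun k : ℕ => If^[k] x) atTop (𝓝 lam) := by
  have hn0 : 0 < n := by omega
  set i0 : Fin n := ⟨0, by omega⟩ with hi0def
  set iN : Fin n := ⟨n - 1, by omega⟩ with hiNdef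
  have hi0N : i0 < iN := by
    rw [Fin.lt_def]; simp [hi0def, hiNdef]; omega
  have hK : 0 < a iN - a i0 := sub_pos.2 (ha hi0N)
  set K : ℝ := a iN - a i0 with hKdef
  have hK2 : 0 < K ^ 2 := by positivity
  -- basic values
  have hE1' : a i0 < E := hE1
  have hE2' : E < a iN := hE2
  have hIfval : ∀ t, If t = t - f t / K ^ 2 := fun t => by rw [hIf]
  -- S, T, U
  set S : ℝ → ℝ := fun t => ∑ i, Real.exp (t * a i) with hSdef
  set T : ℝ → ℝ := fun t => ∑ i, a i * Real.exp (t * a i) with hTdef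
  set U : ℝ → ℝ := fun t => ∑ i, a i * a i * Real.exp (t * a i) with hUdef
  have hfval : ∀ t, f t = T t / S t - E := fun t => by rw [hf]
  have hSpos : ∀ t, 0 < S t := fun t =>
    Finset.sum_pos (fun i _ => Real.exp_pos _) ⟨i0, Finset.mem_univ _⟩
  have haS : ∀ t, HasDerivAt S (T t) t := by
    intro t
    have h : HasDerivAt (fun t => ∑ i, Real.exp (t * a i))
        (∑ i : Fin n, Real.exp (t * a i) * a i) t :=
      HasDerivAt.fun_sum fun i _ => (hasDerivAt_mul_const (a i)).exp
    convert h using 1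
    exact Finset.sum_congr rfl fun i _ => mul_comm _ _
  have haT : ∀ t, HasDerivAt T (U t) t := by
    intro t
    have h : HasDerivAt (fun t => ∑ i, a i * Real.exp (t * a i))
        (∑ i : Fin n, a i * (Real.exp (t * a i) * a i)) t :=
      HasDerivAt.fun_sum fun i _ => ((hasDerivAt_mul_const (a i)).exp).const_mul (a i)
    convert h using 1
    exact Finset.sum_congr rfl fun i _ => by ring
  have haf : ∀ t, HasDerivAt f ((U t * S t - T t * T t) / S t ^ 2) t := by
    intro t
    rw [hf]
    exact ((haT t).div (haS t) (hSpos t).ne').sub_const E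
  -- variance bounds
  have hvar : ∀ t, 2 * (U t * S t - T t * T t)
      = ∑ i, ∑ j, Real.exp (t * a i) * Real.exp (t * a j) * (a i - a j) ^ 2 := by
    intro t
    exact lagrange_ident (univ : Finset (Fin n)) (fun i => Real.exp (t * a i)) a
  clear_value S T U
  have hDpos : ∀ t, 0 < U t * S t - T t * T t := by
    intro t
    have hterm : 0 < Real.exp (t * a i0) * Real.exp (t * a iN) * (a i0 - a iN) ^ 2 := by
      have hne : a i0 - a iN ≠ 0 := by
        have := ha hi0N; intro h; linarith
      positivity
    have h2 : Real.exp (t * a i0) * Real.exp (t * a iN) * (a i0 - a iN) ^ 2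
        ≤ ∑ i, ∑ j, Real.exp (t * a i) * Real.exp (t * a j) * (a i - a j) ^ 2 := by
      refine le_trans (Finset.single_le_sum
        (f := fun j => Real.exp (t * a i0) * Real.exp (t * a j) * (a i0 - a j) ^ 2)
        (fun j _ => by positivity) (Finset.mem_univ iN)) ?_
      exact Finset.single_le_sum
        (f := fun i => ∑ j, Real.exp (t * a i) * Real.exp (t * a j) * (a i - a j) ^ 2)
        (fun i _ => Finset.sum_nonneg fun j _ => by positivity) (Finset.mem_univ i0)
    linarith [hvar t]
  have hsq : ∀ i j : Fin n, (a i - a j) ^ 2 ≤ K ^ 2 := by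
    intro i j
    have h1 : a i0 ≤ a i := ha.monotone (by rw [Fin.le_def]; simp [hi0def])
    have h2 : a i ≤ a iN := ha.monotone (by rw [Fin.le_def]; simp [hiNdef]; omega)
    have h3 : a i0 ≤ a j := ha.monotone (by rw [Fin.le_def]; simp [hi0def])
    have h4 : a j ≤ a iN := ha.monotone (by rw [Fin.le_def]; simp [hiNdef]; omega)
    apply sq_le_sq' <;> simp [hKdef] <;> linarith
  have hDle : ∀ t, 2 * (U t * S t - T t * T t) ≤ K ^ 2 * S t ^ 2 := by
    intro t
    rw [hvar t]
    have h1 : ∑ i, ∑ j, Real.exp (t * a i) * Real.exp (t * a j) * (a i - a j) ^ 2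
        ≤ ∑ i, ∑ j, Real.exp (t * a i) * Real.exp (t * a j) * K ^ 2 :=
      Finset.sum_le_sum fun i _ => Finset.sum_le_sum fun j _ =>
        mul_le_mul_of_nonneg_left (hsq i j) (by positivity)
    have h2 : ∑ i, ∑ j, Real.exp (t * a i) * Real.exp (t * a j) * K ^ 2
        = K ^ 2 * S t ^ 2 := by
      simp only [hSdef]
      simp_rw [pow_two, Finset.sum_mul_sum, Finset.mul_sum]
      exact Finset.sum_congr rfl fun i _ => Finset.sum_congr rfl fun j _ => by ring
    linarith
  -- monotonicity
  have hfmono : StrictMono f :=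
    strictMono_of_hasDerivAt_pos haf fun t => div_pos (hDpos t) (pow_pos (hSpos t) 2)
  have haIf : ∀ t, HasDerivAt If (1 - (U t * S t - T t * T t) / S t ^ 2 / K ^ 2) t := by
    intro t
    have h := (hasDerivAt_id t).sub (((haf t).div_const (K ^ 2)))
    rw [hIf]
    exact h
  have hIfderiv_pos : ∀ t, 0 < 1 - (U t * S t - T t * T t) / S t ^ 2 / K ^ 2 := by
    intro t
    have hs2 : 0 < S t ^ 2 := pow_pos (hSpos t) 2
    have hlt : (U t * S t - T t * T t) < K ^ 2 * S t ^ 2 := by linarith [hDpos t, hDle t]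
    rw [div_div, sub_pos]
    exact (div_lt_one (mul_pos hs2 hK2)).2 (by linarith)
  have hIfmono : StrictMono If := strictMono_of_hasDerivAt_pos haIf hIfderiv_pos
  have hcf : Continuous f := Differentiable.continuous fun t => (haf t).differentiableAt
  have hcIf : Continuous If := Differentiable.continuous fun t => (haIf t).differentiableAt
  -- limits at infinity
  have hfactor : ∀ (c : ℝ) (t : ℝ), f t
      = (∑ i, a i * Real.exp (t * (a i - c))) / (∑ i, Real.exp (t * (a i - c))) - E := by
    intro c t
    rw [hfval]
    congr 1
    have h1 : ∀ i : Fin n, Real.exp (t * a i) = Real.exp (t * (a i - c)) * Real.exp (t * c) := by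
      intro i; rw [← Real.exp_add]; ring_nf
    have hT' : T t = (∑ i, a i * Real.exp (t * (a i - c))) * Real.exp (t * c) := by
      simp only [hTdef]
      rw [Finset.sum_mul]
      exact Finset.sum_congr rfl fun i _ => by rw [h1 i]; ring
    have hS' : S t = (∑ i, Real.exp (t * (a i - c))) * Real.exp (t * c) := by
      simp only [hSdef]
      rw [Finset.sum_mul]
      exact Finset.sum_congr rfl fun i _ => h1 i
    rw [hT', hS', mul_div_mul_right _ _ (Real.exp_ne_zero _)]
  have hlimtop : Tendsto f atTop (𝓝 (a iN - E)) := by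
    have hnum : Tendsto (fun t => ∑ i, a i * Real.exp (t * (a i - a iN))) atTop (𝓝 (a iN)) := by
      have key : ∀ i : Fin n, Tendsto (fun t => a i * Real.exp (t * (a i - a iN))) atTop
          (𝓝 (if i = iN then a iN else 0)) := by
        intro i
        by_cases hi : i = iN
        · subst hi; simpa using tendsto_const_nhds
        · have hlt : a i - a iN < 0 := by
            have : i < iN := by
              rw [Fin.lt_def]
              have h2 := i.2
              have : i.val ≠ n - 1 := fun h => hi (Fin.ext (by simp [hiNdef, h]))
              simp [hiNdef]; omega
            have := ha this; linarith
          have h1 : Tendsto (fun t : ℝ => t * (a i - a iN)) atTop atBot :=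
            Tendsto.atTop_mul_const_of_neg hlt tendsto_id
          have h2 := Real.tendsto_exp_atBot.comp h1
          have h3 := h2.const_mul (a i)
          simpa [hi, Function.comp] using h3
      have h := tendsto_finset_sum (univ : Finset (Fin n)) (fun i _ => key i)
      simpa [Finset.sum_ite_eq'] using h
    have hden : Tendsto (fun t => ∑ i, Real.exp (t * (a i - a iN))) atTop (𝓝 1) := by
      have key : ∀ i : Fin n, Tendsto (fun t => Real.exp (t * (a i - a iN))) atTop
          (𝓝 (if i = iN then 1 else 0)) := by
        intro i
        by_cases hi : i = iN
        · subst hi; simpa using tendsto_const_nhds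
        · have hlt : a i - a iN < 0 := by
            have : i < iN := by
              rw [Fin.lt_def]
              have h2 := i.2
              have : i.val ≠ n - 1 := fun h => hi (Fin.ext (by simp [hiNdef, h]))
              simp [hiNdef]; omega
            have := ha this; linarith
          have h1 : Tendsto (fun t : ℝ => t * (a i - a iN)) atTop atBot :=
            Tendsto.atTop_mul_const_of_neg hlt tendsto_id
          rw [if_neg hi]
          exact Real.tendsto_exp_atBot.comp h1
      have h := tendsto_finset_sum (univ : Finset (Fin n)) (fun i _ => key i)
      simpa [Finset.sum_ite_eq'] using h
    have h := (hnum.div hden one_ne_zero).sub_const E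
    have heq : f = fun t => (∑ i, a i * Real.exp (t * (a i - a iN)))
        / (∑ i, Real.exp (t * (a i - a iN))) - E := funext (hfactor (a iN))
    rw [heq]
    simpa using h
  have hlimbot : Tendsto f atBot (𝓝 (a i0 - E)) := by
    have hnum : Tendsto (fun t => ∑ i, a i * Real.exp (t * (a i - a i0))) atBot (𝓝 (a i0)) := by
      have key : ∀ i : Fin n, Tendsto (fun t => a i * Real.exp (t * (a i - a i0))) atBot
          (𝓝 (if i = i0 then a i0 else 0)) := by
        intro i
        by_cases hi : i = i0
        · subst hi; simpa using tendsto_const_nhds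
        · have hlt : 0 < a i - a i0 := by
            have : i0 < i := by
              rw [Fin.lt_def]
              have : i.val ≠ 0 := fun h => hi (Fin.ext (by simp [hi0def, h]))
              simp [hi0def]; omega
            have := ha this; linarith
          have h1 : Tendsto (fun t : ℝ => t * (a i - a i0)) atBot atBot :=
            Tendsto.atBot_mul_const hlt tendsto_id
          have h2 := Real.tendsto_exp_atBot.comp h1
          have h3 := h2.const_mul (a i)
          simpa [hi, Function.comp] using h3
      have h := tendsto_finset_sum (univ : Finset (Fin n)) (fun i _ => key i)
      simpa [Finset.sum_ite_eq'] using h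
    have hden : Tendsto (fun t => ∑ i, Real.exp (t * (a i - a i0))) atBot (𝓝 1) := by
      have key : ∀ i : Fin n, Tendsto (fun t => Real.exp (t * (a i - a i0))) atBot
          (𝓝 (if i = i0 then 1 else 0)) := by
        intro i
        by_cases hi : i = i0
        · subst hi; simpa using tendsto_const_nhds
        · have hlt : 0 < a i - a i0 := by
            have : i0 < i := by
              rw [Fin.lt_def]
              have : i.val ≠ 0 := fun h => hi (Fin.ext (by simp [hi0def, h]))
              simp [hi0def]; omega
            have := ha this; linarith
          have h1 : Tendsto (fun t : ℝ => t * (a i - a i0)) atBot atBot :=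
            Tendsto.atBot_mul_const hlt tendsto_id
          rw [if_neg hi]
          exact Real.tendsto_exp_atBot.comp h1
      have h := tendsto_finset_sum (univ : Finset (Fin n)) (fun i _ => key i)
      simpa [Finset.sum_ite_eq'] using h
    have h := (hnum.div hden one_ne_zero).sub_const E
    have heq : f = fun t => (∑ i, a i * Real.exp (t * (a i - a i0)))
        / (∑ i, Real.exp (t * (a i - a i0))) - E := funext (hfactor (a i0))
    rw [heq]
    simpa using h
  -- existence of a zero
  obtain ⟨t2, ht2⟩ : ∃ t2, 0 < f t2 :=
    (hlimtop.eventually (eventually_gt_nhds (by linarith : (0:ℝ) < a iN - E))).exists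
  obtain ⟨t1, ht1⟩ : ∃ t1, f t1 < 0 :=
    (hlimbot.eventually (eventually_lt_nhds (by linarith : a i0 - E < (0:ℝ)))).exists
  obtain ⟨lam, hlam⟩ := intermediate_value_univ t1 t2 hcf ⟨le_of_lt ht1, le_of_lt ht2⟩
  -- lam is a fixed point
  have hIflam : If lam = lam := by rw [hIfval, hlam]; ring
  have huniq : ∀ mu : ℝ, If mu = mu → mu = lam := by
    intro mu hmu
    rw [hIfval] at hmu
    have hfm : f mu = 0 := by
      have : f mu / K ^ 2 = 0 := by linarith
      field_simp at this
      simpa using this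
    exact hfmono.injective (hfm.trans hlam.symm)
  refine ⟨lam, hlam, hIflam, huniq, ?_⟩
  intro x
  have hge : ∀ t, t ≤ lam → t ≤ If t := by
    intro t ht
    rw [hIfval]
    have h1 : f t ≤ 0 := hlam ▸ hfmono.monotone ht
    have h2 : f t / K ^ 2 ≤ 0 := div_nonpos_iff.2 (Or.inr ⟨h1, le_of_lt hK2⟩)
    linarith
  have hle' : ∀ t, lam ≤ t → If t ≤ t := by
    intro t ht
    rw [hIfval]
    have h1 : 0 ≤ f t := hlam ▸ hfmono.monotone ht
    have h2 : 0 ≤ f t / K ^ 2 := div_nonneg h1 (le_of_lt hK2)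
    linarith
  rcases le_total x lam with hx | hx
  · -- increasing towards lam
    have hble : ∀ k, If^[k] x ≤ lam := by
      intro k; induction k with
      | zero => simpa using hx
      | succ k ih =>
        rw [Function.iterate_succ_apply']
        calc If (If^[k] x) ≤ If lam := hIfmono.monotone ih
          _ = lam := hIflam
    have hmon : Monotone fun k => If^[k] x := monotone_nat_of_le_succ fun k => by
      rw [Function.iterate_succ_apply']; exact hge _ (hble k)
    have hbdd : BddAbove (Set.range fun k => If^[k] x) :=
      ⟨lam, by rintro y ⟨k, rfl⟩; exact hble k⟩
    have hconv := tendsto_atTop_ciSup hmon hbdd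
    set L := ⨆ k, If^[k] x with hLdef
    have hLfix : If L = L := by
      have h1 : Tendsto (fun k => If^[k + 1] x) atTop (𝓝 L) :=
        hconv.comp (tendsto_add_atTop_nat 1)
      have h3 : (fun k => If^[k + 1] x) = fun k => If (If^[k] x) :=
        funext fun k => Function.iterate_succ_apply' If k x
      rw [h3] at h1
      have h2 : Tendsto (fun k => If (If^[k] x)) atTop (𝓝 (If L)) :=
        (hcIf.tendsto L).comp hconv
      exact tendsto_nhds_unique h2 h1
    have : L = lam := huniq L hLfix
    rwa [this] at hconv
  · -- decreasing towards lam
    have hble : ∀ k, lam ≤ If^[k] x := by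
      intro k; induction k with
      | zero => simpa using hx
      | succ k ih =>
        rw [Function.iterate_succ_apply']
        calc lam = If lam := hIflam.symm
          _ ≤ If (If^[k] x) := hIfmono.monotone ih
    have hmon : Antitone fun k => If^[k] x := antitone_nat_of_succ_le fun k => by
      rw [Function.iterate_succ_apply']; exact hle' _ (hble k)
    have hbdd : BddBelow (Set.range fun k => If^[k] x) :=
      ⟨lam, by rintro y ⟨k, rfl⟩; exact hble k⟩
    have hconv := tendsto_atTop_ciInf hmon hbdd
    set L := ⨅ k, If^[k] x with hLdef
    have hLfix : If L = L := by
      have h1 : Tendsto (fun k => If^[k + 1] x) atTop (𝓝 L) :=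
        hconv.comp (tendsto_add_atTop_nat 1)
      have h3 : (fun k => If^[k + 1] x) = fun k => If (If^[k] x) :=
        funext fun k => Function.iterate_succ_apply' If k x
      rw [h3] at h1
      have h2 : Tendsto (fun k => If (If^[k] x)) atTop (𝓝 (If L)) :=
        (hcIf.tendsto L).comp hconv
      exact tendsto_nhds_unique h2 h1
    have : L = lam := huniq L hLfix
    rwa [this] at hconv
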